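/- Let Γ be a countable discrete abelian group, X a finite-dimensional complex Hilbert space, h ∈ AP(Γ, X), χ ∈ Γ̂, and let (H_n) be a Bohr–Bochner sequence for Γ. Then the Fourier coefficient ĥ(χ) = lim_n (1/|H_n|) Σ_{γ∈H_n} conj(χ(γ))·h(γ) exists, and the sequence of functions U_X(χ, H_n)h converges uniformly on Γ to χ⊗ĥ(χ), where (χ⊗b)(γ) = χ(γ)·b. -/

import Mathlib

open Filter
open scoped Topology

/-- A character of the discrete abelian group `Γ`. -/
def IsChar {Γ : Type*} [AddCommGroup Γ] (χ : Γ → ℂ) : Prop :=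
  (∀ γ γ' : Γ, χ (γ + γ') = χ γ * χ γ') ∧ ∀ γ : Γ, ‖χ γ‖ = 1

/-- An `X`-valued trigonometric polynomial on `Γ`. -/
def IsTrigPoly {Γ X : Type*} [AddCommGroup Γ] [NormedAddCommGroup X] [Module ℂ X]
    (p : Γ → X) : Prop :=
  ∃ (n : ℕ) (χ : Fin n → Γ → ℂ) (a : Fin n → X),
    (∀ k, IsChar (χ k)) ∧ ∀ γ, p γ = ∑ k, χ k γ • a k

/-- An almost periodic `X`-valued function on `Γ`. -/
def IsAP {Γ X : Type*} [AddCommGroup Γ] [NormedAddCommGroup X] [Module ℂ X]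
    (h : Γ → X) : Prop :=
  ∀ ε : ℝ, 0 < ε → ∃ p : Γ → X, IsTrigPoly p ∧ ∀ γ, ‖h γ - p γ‖ < ε

/-- A Bohr–Bochner sequence for `Γ`. -/
def IsBohrBochner {Γ : Type*} [AddCommGroup Γ] [DecidableEq Γ] (H : ℕ → Finset Γ) : Prop :=
  Monotone H ∧ (∀ γ : Γ, ∃ n, γ ∈ H n) ∧
    ∀ γ : Γ, Tendsto
      (fun n => (((H n).filter fun x => γ + x ∉ H n).card : ℝ) / ((H n).card : ℝ))
      atTop (nhds 0)

section charfacts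
variable {Γ : Type*} [AddCommGroup Γ]

lemma IsChar.conj_mul_self {χ : Γ → ℂ} (h : IsChar χ) (γ : Γ) :
    (starRingEnd ℂ) (χ γ) * χ γ = 1 := by
  rw [← Complex.normSq_eq_conj_mul_self, ← Complex.sq_norm, h.2 γ]
  norm_num

lemma IsChar.mul_conj_self {χ : Γ → ℂ} (h : IsChar χ) (γ : Γ) :
    χ γ * (starRingEnd ℂ) (χ γ) = 1 := by
  rw [mul_comm]; exact h.conj_mul_self γ

lemma IsChar.map_sub {χ : Γ → ℂ} (h : IsChar χ) (a b : Γ) :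
    χ (a - b) = χ a * (starRingEnd ℂ) (χ b) := by
  have h1 : χ (a - b) * χ b = χ a := by rw [← h.1, sub_add_cancel]
  calc χ (a - b) = χ (a - b) * (χ b * (starRingEnd ℂ) (χ b)) := by
        rw [h.mul_conj_self, mul_one]
    _ = (χ (a - b) * χ b) * (starRingEnd ℂ) (χ b) := by ring
    _ = χ a * (starRingEnd ℂ) (χ b) := by rw [h1]

lemma IsChar.conj {χ : Γ → ℂ} (h : IsChar χ) : IsChar (fun γ => (starRingEnd ℂ) (χ γ)) :=
  ⟨fun γ γ' => by simp [h.1, map_mul], fun γ => by simp [h.2 γ]⟩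

lemma IsChar.mul {χ ψ : Γ → ℂ} (h : IsChar χ) (h' : IsChar ψ) :
    IsChar (fun γ => χ γ * ψ γ) :=
  ⟨fun γ γ' => by show χ (γ+γ') * ψ (γ+γ') = _; rw [h.1, h'.1]; ring,
   fun γ => by show ‖χ γ * ψ γ‖ = 1; rw [norm_mul, h.2, h'.2, one_mul]⟩

end charfacts

section avg
variable {Γ : Type*} [AddCommGroup Γ] [DecidableEq Γ]

noncomputable def avgC (H : ℕ → Finset Γ) (ψ : Γ → ℂ) (n : ℕ) : ℂ :=
  ((H n).card : ℂ)⁻¹ * ∑ γ ∈ H n, ψ γ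

lemma eventually_nonempty {H : ℕ → Finset Γ} (hH : IsBohrBochner H) :
    ∀ᶠ n in atTop, (H n).Nonempty := by
  obtain ⟨n0, hn0⟩ := hH.2.1 0
  exact eventually_atTop.2 ⟨n0, fun m hm => ⟨0, hH.1 hm hn0⟩⟩

lemma avg_one_tendsto {H : ℕ → Finset Γ} (hH : IsBohrBochner H) :
    Tendsto (avgC H (fun _ => (1 : ℂ))) atTop (nhds 1) := by
  unfold avgC
  apply Tendsto.congr' _ tendsto_const_nhds
  filter_upwards [eventually_nonempty hH] with n hn
  have : ((H n).card : ℂ) ≠ 0 := by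
    exact_mod_cast Nat.cast_ne_zero.mpr (Finset.card_ne_zero_of_mem hn.choose_spec)
  simp [this]

lemma avg_char_zero {H : ℕ → Finset Γ} (hH : IsBohrBochner H) {ψ : Γ → ℂ}
    (hψ : IsChar ψ) {γ0 : Γ} (h1 : ψ γ0 ≠ 1) :
    Tendsto (avgC H ψ) atTop (nhds 0) := by
  unfold avgC
  set c : ℝ := ‖ψ γ0 - 1‖ with hc
  have hcpos : 0 < c := by
    simpa [hc] using sub_ne_zero_of_ne h1
  have key : ∀ n, ‖((H n).card : ℂ)⁻¹ * ∑ γ ∈ H n, ψ γ‖ ≤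
      (2 / c) * ((((H n).filter fun x => γ0 + x ∉ H n).card : ℝ) / ((H n).card : ℝ)) := by
    intro n
    set K := H n with hK
    set F : ℕ := (K.filter fun x => γ0 + x ∉ K).card with hF
    have hinj : Function.Injective (fun x : Γ => γ0 + x) := fun a b => by simp
    set S : Finset Γ := K.image (fun x => γ0 + x) with hS
    have hcardS : S.card = K.card := Finset.card_image_of_injective _ hinj
    have hsum1 : ∑ δ ∈ S, ψ δ = ψ γ0 * ∑ γ ∈ K, ψ γ := by
      rw [hS, Finset.sum_image (fun a _ b _ hab => hinj hab)]
      simp [hψ.1, Finset.mul_sum]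
    have hSK : S \ K = (K.filter fun x => γ0 + x ∉ K).image (fun x => γ0 + x) := by
      ext δ
      simp only [hS, Finset.mem_sdiff, Finset.mem_image, Finset.mem_filter]
      constructor
      · rintro ⟨⟨γ, hγ, rfl⟩, hδ⟩; exact ⟨γ, ⟨hγ, hδ⟩, rfl⟩
      · rintro ⟨γ, ⟨hγ, hδ⟩, rfl⟩; exact ⟨⟨γ, hγ, rfl⟩, hδ⟩
    have hcard1 : (S \ K).card = F := by
      rw [hSK, Finset.card_image_of_injective _ hinj]
    have hcard2 : (K \ S).card = F := by
      have h1 := Finset.card_sdiff_add_card_inter S K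
      have h2 := Finset.card_sdiff_add_card_inter K S
      rw [Finset.inter_comm] at h2
      omega
    have hbound : ‖(ψ γ0 - 1) * ∑ γ ∈ K, ψ γ‖ ≤ 2 * F := by
      have : (ψ γ0 - 1) * ∑ γ ∈ K, ψ γ = ∑ δ ∈ S \ K, ψ δ - ∑ γ ∈ K \ S, ψ γ := by
        rw [Finset.sum_sdiff_sub_sum_sdiff, hsum1]; ring
      rw [this]
      have b1 : ‖∑ δ ∈ S \ K, ψ δ‖ ≤ (F : ℝ) := by
        calc ‖∑ δ ∈ S \ K, ψ δ‖ ≤ ∑ δ ∈ S \ K, ‖ψ δ‖ := norm_sum_le _ _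
          _ = (S \ K).card := by simp [hψ.2]
          _ = F := by rw [hcard1]
      have b2 : ‖∑ γ ∈ K \ S, ψ γ‖ ≤ (F : ℝ) := by
        calc ‖∑ γ ∈ K \ S, ψ γ‖ ≤ ∑ γ ∈ K \ S, ‖ψ γ‖ := norm_sum_le _ _
          _ = (K \ S).card := by simp [hψ.2]
          _ = F := by rw [hcard2]
      calc ‖∑ δ ∈ S \ K, ψ δ - ∑ γ ∈ K \ S, ψ γ‖
          ≤ ‖∑ δ ∈ S \ K, ψ δ‖ + ‖∑ γ ∈ K \ S, ψ γ‖ := norm_sub_le _ _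
        _ ≤ F + F := add_le_add b1 b2
        _ = 2 * F := by ring
    have hsumle : ‖∑ γ ∈ K, ψ γ‖ ≤ 2 * F / c := by
      rw [le_div_iff₀ hcpos, mul_comm _ c]
      calc c * ‖∑ γ ∈ K, ψ γ‖ = ‖(ψ γ0 - 1) * ∑ γ ∈ K, ψ γ‖ := by rw [norm_mul, hc]
        _ ≤ 2 * F := hbound
    calc ‖((K).card : ℂ)⁻¹ * ∑ γ ∈ K, ψ γ‖
        = ((K.card : ℝ))⁻¹ * ‖∑ γ ∈ K, ψ γ‖ := by
          rw [norm_mul, norm_inv]; norm_num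
      _ ≤ ((K.card : ℝ))⁻¹ * (2 * F / c) := by
          apply mul_le_mul_of_nonneg_left hsumle (by positivity)
      _ = (2 / c) * ((F : ℝ) / (K.card : ℝ)) := by ring
  rw [tendsto_zero_iff_norm_tendsto_zero]
  apply squeeze_zero (fun n => norm_nonneg _) key
  have := (hH.2.2 γ0).const_mul (2 / c)
  simpa using this



lemma avg_char_one {H : ℕ → Finset Γ} (hH : IsBohrBochner H) {ψ : Γ → ℂ}
    (h1 : ∀ γ, ψ γ = 1) : Tendsto (avgC H ψ) atTop (nhds 1) := by
  have : avgC H ψ = avgC H (fun _ => (1 : ℂ)) := by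
    funext n; unfold avgC; congr 1; exact Finset.sum_congr rfl fun γ _ => h1 γ
  rw [this]; exact avg_one_tendsto hH

end avg
section trig
variable {Γ : Type*} [AddCommGroup Γ] [DecidableEq Γ]
variable {X : Type*} [NormedAddCommGroup X] [NormedSpace ℂ X]

omit [DecidableEq Γ] in
lemma avg_diff_le (K : Finset Γ) (w : Γ → ℂ) (hw : ∀ γ, ‖w γ‖ = 1)
    (u : Γ → X) {ε : ℝ} (hu : ∀ γ, ‖u γ‖ ≤ ε) :
    ‖(K.card : ℂ)⁻¹ • ∑ γ ∈ K, w γ • u γ‖ ≤ ε := by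
  have hε : 0 ≤ ε := le_trans (norm_nonneg _) (hu 0)
  have h1 : ‖∑ γ ∈ K, w γ • u γ‖ ≤ K.card * ε := by
    calc ‖∑ γ ∈ K, w γ • u γ‖ ≤ ∑ γ ∈ K, ‖w γ • u γ‖ := norm_sum_le _ _
      _ ≤ ∑ _γ ∈ K, ε := Finset.sum_le_sum fun γ _ => by
          rw [norm_smul, hw, one_mul]; exact hu γ
      _ = K.card * ε := by simp [mul_comm]
  calc ‖(K.card : ℂ)⁻¹ • ∑ γ ∈ K, w γ • u γ‖
      = ((K.card : ℝ))⁻¹ * ‖∑ γ ∈ K, w γ • u γ‖ := by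
        rw [norm_smul, norm_inv]; norm_num
    _ ≤ ((K.card : ℝ))⁻¹ * (K.card * ε) := by
        apply mul_le_mul_of_nonneg_left h1 (by positivity)
    _ ≤ ε := by
        rcases Nat.eq_zero_or_pos K.card with h | h
        · simp [h, hε]
        · rw [← mul_assoc, inv_mul_cancel₀ (by positivity : (K.card:ℝ) ≠ 0), one_mul]

lemma trig_poly_case (H : ℕ → Finset Γ) (hH : IsBohrBochner H)
    (χ : Γ → ℂ) (hχ : IsChar χ) (p : Γ → X) (hp : IsTrigPoly p) :
    ∃ b : X,
      Tendsto (fun n => ((H n).card : ℂ)⁻¹ • ∑ γ ∈ H n, (starRingEnd ℂ) (χ γ) • p γ)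
        atTop (nhds b) ∧
      TendstoUniformly
        (fun n γ' => ((H n).card : ℂ)⁻¹ • ∑ γ ∈ H n, χ γ • p (γ' - γ))
        (fun γ' => χ γ' • b) atTop := by
  classical
  obtain ⟨m, χs, a, hchar, hpeq⟩ := hp
  set ind : Fin m → ℂ := fun k => if ∀ γ, χs k γ = χ γ then 1 else 0 with hind
  have hind1 : ∀ k, (∀ γ, χs k γ = χ γ) → ind k = 1 := by
    intro k hk; simp [hind, hk]
  have hind0 : ∀ k γ0, χs k γ0 ≠ χ γ0 → ind k = 0 := by
    intro k γ0 hγ0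
    have hno : ¬∀ γ, χs k γ = χ γ := fun hall => hγ0 (hall γ0)
    simp [hind, hno]
  refine ⟨∑ k, ind k • a k, ?_, ?_⟩
  · -- coefficient convergence
    have hrw : ∀ n, ((H n).card : ℂ)⁻¹ • ∑ γ ∈ H n, (starRingEnd ℂ) (χ γ) • p γ
        = ∑ k, (avgC H (fun γ => (starRingEnd ℂ) (χ γ) * χs k γ) n) • a k := by
      intro n
      simp only [hpeq, Finset.smul_sum, smul_smul]
      rw [Finset.sum_comm]
      apply Finset.sum_congr rfl
      intro k _
      rw [← Finset.sum_smul]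
      congr 1
      unfold avgC
      rw [Finset.mul_sum]
    simp only [hrw]
    apply tendsto_finset_sum
    intro k _
    apply Tendsto.smul_const
    by_cases hk : ∀ γ, χs k γ = χ γ
    · rw [hind1 k hk]
      apply avg_char_one hH
      intro γ; rw [hk γ]; exact hχ.conj_mul_self γ
    · push_neg at hk
      obtain ⟨γ0, hγ0⟩ := hk
      have hψ : IsChar (fun γ => (starRingEnd ℂ) (χ γ) * χs k γ) := hχ.conj.mul (hchar k)
      have hne : (starRingEnd ℂ) (χ γ0) * χs k γ0 ≠ 1 := by
        intro hcon
        apply hγ0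
        have := congrArg (fun z => χ γ0 * z) hcon
        simp only [mul_one] at this
        rw [← mul_assoc, hχ.mul_conj_self, one_mul] at this
        exact this
      rw [hind0 k γ0 hγ0]
      exact avg_char_zero hH hψ hne
  · -- uniform convergence
    have hconv : ∀ k, Tendsto (avgC H (fun γ => χ γ * (starRingEnd ℂ) (χs k γ)))
        atTop (nhds (ind k)) := by
      intro k
      by_cases hk : ∀ γ, χs k γ = χ γ
      · rw [hind1 k hk]
        apply avg_char_one hH
        intro γ; rw [hk γ]; exact hχ.mul_conj_self γ
      · push_neg at hk
        obtain ⟨γ0, hγ0⟩ := hk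
        have hψ : IsChar (fun γ => χ γ * (starRingEnd ℂ) (χs k γ)) := hχ.mul (hchar k).conj
        have hne : χ γ0 * (starRingEnd ℂ) (χs k γ0) ≠ 1 := by
          intro hcon
          apply hγ0
          have := congrArg (fun z => z * χs k γ0) hcon
          simp only [one_mul] at this
          rw [mul_assoc, (hchar k).conj_mul_self, mul_one] at this
          exact this.symm
        rw [hind0 k γ0 hγ0]
        exact avg_char_zero hH hψ hne
    have hrw2 : ∀ n γ', ((H n).card : ℂ)⁻¹ • ∑ γ ∈ H n, χ γ • p (γ' - γ)
        = ∑ k, (avgC H (fun γ => χ γ * (starRingEnd ℂ) (χs k γ)) n * χs k γ') • a k := by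
      intro n γ'
      simp only [hpeq, Finset.smul_sum, smul_smul, (hchar _).map_sub]
      rw [Finset.sum_comm]
      apply Finset.sum_congr rfl
      intro k _
      rw [← Finset.sum_smul]
      congr 1
      unfold avgC
      rw [Finset.mul_sum, Finset.sum_mul]
      apply Finset.sum_congr rfl
      intro γ _
      ring
    have htgt : ∀ γ', χ γ' • (∑ k, ind k • a k) = ∑ k, (ind k * χs k γ') • a k := by
      intro γ'
      rw [Finset.smul_sum]
      apply Finset.sum_congr rfl
      intro k _
      by_cases hk : ∀ γ, χs k γ = χ γ
      · rw [hind1 k hk, one_smul, one_mul, hk γ']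
      · push_neg at hk
        obtain ⟨γ0, hγ0⟩ := hk
        rw [hind0 k γ0 hγ0]
        simp
    rw [Metric.tendstoUniformly_iff]
    intro ε hε
    have hD : Tendsto
        (fun n => ∑ k, ‖avgC H (fun γ => χ γ * (starRingEnd ℂ) (χs k γ)) n - ind k‖ * ‖a k‖)
        atTop (nhds 0) := by
      have h2 : Tendsto
          (fun n => ∑ k, ‖avgC H (fun γ => χ γ * (starRingEnd ℂ) (χs k γ)) n - ind k‖ * ‖a k‖)
          atTop (nhds (∑ _k : Fin m, (0:ℝ))) := by
        apply tendsto_finset_sum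
        intro k _
        have h0 := (hconv k).sub (tendsto_const_nhds (x := ind k))
        rw [sub_self] at h0
        simpa using h0.norm.mul_const ‖a k‖
      simpa using h2
    filter_upwards [hD.eventually (gt_mem_nhds hε)] with n hn γ'
    have hbound : dist (χ γ' • ∑ k, ind k • a k)
        (((H n).card : ℂ)⁻¹ • ∑ γ ∈ H n, χ γ • p (γ' - γ))
        ≤ ∑ k, ‖avgC H (fun γ => χ γ * (starRingEnd ℂ) (χs k γ)) n - ind k‖ * ‖a k‖ := by
      rw [dist_eq_norm, htgt, hrw2, ← Finset.sum_sub_distrib]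
      calc ‖∑ k, ((ind k * χs k γ') • a k
              - (avgC H (fun γ => χ γ * (starRingEnd ℂ) (χs k γ)) n * χs k γ') • a k)‖
          ≤ ∑ k, ‖(ind k * χs k γ') • a k
              - (avgC H (fun γ => χ γ * (starRingEnd ℂ) (χs k γ)) n * χs k γ') • a k‖ :=
            norm_sum_le _ _
        _ ≤ ∑ k, ‖avgC H (fun γ => χ γ * (starRingEnd ℂ) (χs k γ)) n - ind k‖ * ‖a k‖ := by
            apply Finset.sum_le_sum
            intro k _
            rw [← sub_smul, ← sub_mul, norm_smul, norm_mul, (hchar k).2, mul_one,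
              norm_sub_rev]
    exact lt_of_le_of_lt hbound hn

end trig

/-- for `h ∈ AP(Γ, X)`, a character `χ` and a Bohr–Bochner sequence
`(Hₙ)`, the Fourier coefficient `ĥ(χ) = lim_n |Hₙ|⁻¹ Σ_{γ∈Hₙ} conj (χ γ) • h γ`
exists, and `U_X(χ, Hₙ)h`, where
`(U_X(χ,H)f)(γ') = |H|⁻¹ Σ_{γ∈H} χ(γ) • f(γ' − γ)`, converges uniformly on `Γ`
to `χ ⊗ ĥ(χ) : γ' ↦ χ(γ') • ĥ(χ)`. -/
theorem averaging_operators_tendstoUniformly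
    {Γ : Type*} [AddCommGroup Γ] [Countable Γ] [DecidableEq Γ]
    {X : Type*} [NormedAddCommGroup X] [InnerProductSpace ℂ X] [FiniteDimensional ℂ X]
    (H : ℕ → Finset Γ) (hH : IsBohrBochner H)
    (h : Γ → X) (hAP : IsAP h) (χ : Γ → ℂ) (hχ : IsChar χ) :
    ∃ b : X,
      Tendsto
        (fun n => (((H n).card : ℂ))⁻¹ • ∑ γ ∈ H n, (starRingEnd ℂ) (χ γ) • h γ)
        atTop (nhds b) ∧
      TendstoUniformly
        (fun n γ' => (((H n).card : ℂ))⁻¹ • ∑ γ ∈ H n, χ γ • h (γ' - γ))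
        (fun γ' => χ γ' • b) atTop := by
  haveI : CompleteSpace X := FiniteDimensional.complete ℂ X
  set c : ℕ → X := fun n => ((H n).card : ℂ)⁻¹ • ∑ γ ∈ H n, (starRingEnd ℂ) (χ γ) • h γ
    with hc
  -- difference bounds
  have hcoefdiff : ∀ (p : Γ → X) {δ : ℝ}, (∀ γ, ‖h γ - p γ‖ ≤ δ) → ∀ n,
      ‖c n - ((H n).card : ℂ)⁻¹ • ∑ γ ∈ H n, (starRingEnd ℂ) (χ γ) • p γ‖ ≤ δ := by
    intro p δ hp n
    have : c n - ((H n).card : ℂ)⁻¹ • ∑ γ ∈ H n, (starRingEnd ℂ) (χ γ) • p γ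
        = ((H n).card : ℂ)⁻¹ • ∑ γ ∈ H n, (starRingEnd ℂ) (χ γ) • (h γ - p γ) := by
      rw [hc]
      simp only [smul_sub, Finset.sum_sub_distrib, smul_sub]
    rw [this]
    exact avg_diff_le _ _ (fun γ => by simp [hχ.2 γ]) _ hp
  have hSdiff : ∀ (p : Γ → X) {δ : ℝ}, (∀ γ, ‖h γ - p γ‖ ≤ δ) → ∀ n γ',
      ‖(((H n).card : ℂ)⁻¹ • ∑ γ ∈ H n, χ γ • h (γ' - γ))
        - ((H n).card : ℂ)⁻¹ • ∑ γ ∈ H n, χ γ • p (γ' - γ)‖ ≤ δ := by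
    intro p δ hp n γ'
    have : (((H n).card : ℂ)⁻¹ • ∑ γ ∈ H n, χ γ • h (γ' - γ))
        - ((H n).card : ℂ)⁻¹ • ∑ γ ∈ H n, χ γ • p (γ' - γ)
        = ((H n).card : ℂ)⁻¹ • ∑ γ ∈ H n, χ γ • (h (γ' - γ) - p (γ' - γ)) := by
      simp only [smul_sub, Finset.sum_sub_distrib, smul_sub]
    rw [this]
    exact avg_diff_le _ _ hχ.2 _ (fun γ => hp (γ' - γ))
  -- c is Cauchy
  have hcauchy : CauchySeq c := by
    rw [Metric.cauchySeq_iff]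
    intro ε hε
    obtain ⟨p, hptrig, hpapprox⟩ := hAP (ε / 4) (by positivity)
    obtain ⟨bp, hbpcoef, -⟩ := trig_poly_case H hH χ hχ p hptrig
    have hple : ∀ γ, ‖h γ - p γ‖ ≤ ε / 4 := fun γ => (hpapprox γ).le
    have := hbpcoef.cauchySeq
    rw [Metric.cauchySeq_iff] at this
    obtain ⟨N, hN⟩ := this (ε / 4) (by positivity)
    refine ⟨N, fun m hm n hn => ?_⟩
    set cp : ℕ → X := fun n => ((H n).card : ℂ)⁻¹ • ∑ γ ∈ H n, (starRingEnd ℂ) (χ γ) • p γ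
    calc dist (c m) (c n) ≤ dist (c m) (cp m) + dist (cp m) (cp n) + dist (cp n) (c n) :=
          dist_triangle4 _ _ _ _
      _ < ε / 4 + ε / 4 + ε / 4 + ε / 4 := by
          have h1 : dist (c m) (cp m) ≤ ε / 4 := by
            rw [dist_eq_norm]; exact hcoefdiff p hple m
          have h2 : dist (cp m) (cp n) < ε / 4 := hN m hm n hn
          have h3 : dist (cp n) (c n) ≤ ε / 4 := by
            rw [dist_eq_norm, norm_sub_rev]; exact hcoefdiff p hple n
          linarith
      _ = ε := by ring
  obtain ⟨b, hb⟩ := cauchySeq_tendsto_of_complete hcauchy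
  refine ⟨b, hb, ?_⟩
  rw [Metric.tendstoUniformly_iff]
  intro ε hε
  obtain ⟨p, hptrig, hpapprox⟩ := hAP (ε / 4) (by positivity)
  obtain ⟨bp, hbpcoef, hbpunif⟩ := trig_poly_case H hH χ hχ p hptrig
  have hple : ∀ γ, ‖h γ - p γ‖ ≤ ε / 4 := fun γ => (hpapprox γ).le
  have hbbp : ‖b - bp‖ ≤ ε / 4 := by
    have htd : Tendsto (fun n => ‖c n - ((H n).card : ℂ)⁻¹ •
        ∑ γ ∈ H n, (starRingEnd ℂ) (χ γ) • p γ‖) atTop (nhds ‖b - bp‖) :=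
      (hb.sub hbpcoef).norm
    exact le_of_tendsto htd (Eventually.of_forall (hcoefdiff p hple))
  rw [Metric.tendstoUniformly_iff] at hbpunif
  filter_upwards [hbpunif (ε / 4) (by positivity)] with n hn γ'
  have h1 : dist (χ γ' • b) (χ γ' • bp) ≤ ε / 4 := by
    rw [dist_eq_norm, ← smul_sub, norm_smul, hχ.2, one_mul]
    exact hbbp
  have h2 : dist (χ γ' • bp) (((H n).card : ℂ)⁻¹ • ∑ γ ∈ H n, χ γ • p (γ' - γ)) < ε / 4 :=
    hn γ'
  have h3 : dist (((H n).card : ℂ)⁻¹ • ∑ γ ∈ H n, χ γ • p (γ' - γ))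
      (((H n).card : ℂ)⁻¹ • ∑ γ ∈ H n, χ γ • h (γ' - γ)) ≤ ε / 4 := by
    rw [dist_eq_norm, norm_sub_rev]
    exact hSdiff p hple n γ'
  calc dist (χ γ' • b) (((H n).card : ℂ)⁻¹ • ∑ γ ∈ H n, χ γ • h (γ' - γ))
      ≤ dist (χ γ' • b) (χ γ' • bp)
        + dist (χ γ' • bp) (((H n).card : ℂ)⁻¹ • ∑ γ ∈ H n, χ γ • p (γ' - γ))
        + dist (((H n).card : ℂ)⁻¹ • ∑ γ ∈ H n, χ γ • p (γ' - γ))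
          (((H n).card : ℂ)⁻¹ • ∑ γ ∈ H n, χ γ • h (γ' - γ)) := dist_triangle4 _ _ _ _
    _ ≤ ε / 4 + ε / 4 + ε / 4 := by linarith
    _ < ε := by linarith
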